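/- arXiv:0712.3635 — 4 statements merged into one kernel-verified Lean document; each statement's English description precedes it below -/
import Mathlib

section
/- Take Ω = [0,1] with Lebesgue measure, X(ω) = ω and K = 1/2. For any 0 < ε < 1 define X̂ = X on [0, 1/2 − ε/2) ∪ (1/2 + ε/2, 1], X̂ = X + ε/2 on [1/2 − ε/2, 1/2], and X̂ = X − ε/2 on (1/2, 1/2 + ε/2]. Then E|X − X̂|^p = ε^{p+1}/2^p and E|χ_{[1/2,∞)}(X) − χ_{[1/2,∞)}(X̂)| = ε. -/
open MeasureTheory

/-- The optimality example: on `Ω = [0,1]` with Lebesgue measure, `X(ω) = ω`, `K = 1/2`,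
and `X̂` obtained from `X` by shifting by `±ε/2` around `1/2`, one has
`E|X − X̂|^p = ε^{p+1}/2^p` and `E|χ_[1/2,∞)(X) − χ_[1/2,∞)(X̂)| = ε`. -/
theorem optimality_example (ε p : ℝ) (hε : 0 < ε) (hε1 : ε < 1) (hp : 0 < p) :
    (∫ x in Set.Icc (0 : ℝ) 1,
        |x - (if x ∈ Set.Icc (1 / 2 - ε / 2) (1 / 2) then x + ε / 2
              else if x ∈ Set.Ioc (1 / 2 : ℝ) (1 / 2 + ε / 2) then x - ε / 2
              else x)| ^ p) = ε ^ (p + 1) / 2 ^ p ∧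
    (∫ x in Set.Icc (0 : ℝ) 1,
        |Set.indicator (Set.Ici (1 / 2 : ℝ)) (fun _ => (1 : ℝ)) x -
         Set.indicator (Set.Ici (1 / 2 : ℝ)) (fun _ => (1 : ℝ))
           (if x ∈ Set.Icc (1 / 2 - ε / 2) (1 / 2) then x + ε / 2
            else if x ∈ Set.Ioc (1 / 2 : ℝ) (1 / 2 + ε / 2) then x - ε / 2
            else x)|) = ε := by
  have hε2 : (0:ℝ) < ε / 2 := by linarith
  set a : ℝ := 1 / 2 - ε / 2 with ha
  set b : ℝ := 1 / 2 + ε / 2 with hb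
  have hsub : Set.Icc a b ⊆ Set.Icc (0:ℝ) 1 :=
    Set.Icc_subset_Icc (by rw [ha]; linarith) (by rw [hb]; linarith)
  have hvol : ∀ c : ℝ, (∫ x in Set.Icc (0:ℝ) 1,
      (Set.Icc a b).indicator (fun _ => c) x) = ε * c := by
    intro c
    rw [MeasureTheory.integral_indicator measurableSet_Icc,
      Measure.restrict_restrict measurableSet_Icc,
      Set.inter_eq_self_of_subset_left hsub, setIntegral_const, Real.volume_real_Icc,
      show b - a = ε by rw [ha, hb]; ring, max_eq_left hε.le, smul_eq_mul]
  have hmem1 : ∀ x : ℝ, x ∈ Set.Icc a (1 / 2) → x ∈ Set.Icc a b := fun x hx =>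
    Set.mem_Icc.mpr ⟨hx.1, hx.2.trans (by rw [hb]; linarith)⟩
  have hmem2 : ∀ x : ℝ, x ∈ Set.Ioc (1 / 2 : ℝ) b → x ∈ Set.Icc a b := fun x hx =>
    Set.mem_Icc.mpr ⟨le_trans (by rw [ha]; linarith) hx.1.le, hx.2⟩
  have hnmem : ∀ x : ℝ, x ∉ Set.Icc a (1 / 2) → x ∉ Set.Ioc (1 / 2 : ℝ) b →
      x ∉ Set.Icc a b := fun x h1 h2 hx =>
    h2 ⟨lt_of_not_ge fun h => h1 ⟨hx.1, h⟩, hx.2⟩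
  constructor
  · have key1 : ∀ x : ℝ,
        |x - (if x ∈ Set.Icc a (1 / 2) then x + ε / 2
              else if x ∈ Set.Ioc (1 / 2 : ℝ) b then x - ε / 2
              else x)| ^ p
        = (Set.Icc a b).indicator (fun _ => (ε / 2) ^ p) x := by
      intro x
      by_cases h1 : x ∈ Set.Icc a (1 / 2)
      · rw [if_pos h1, Set.indicator_of_mem (hmem1 x h1)]
        rw [show x - (x + ε / 2) = -(ε / 2) by ring, abs_neg, abs_of_pos hε2]
      · rw [if_neg h1]
        by_cases h2 : x ∈ Set.Ioc (1 / 2 : ℝ) b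
        · rw [if_pos h2, Set.indicator_of_mem (hmem2 x h2)]
          rw [show x - (x - ε / 2) = ε / 2 by ring, abs_of_pos hε2]
        · rw [if_neg h2, Set.indicator_of_notMem (hnmem x h1 h2)]
          rw [sub_self, abs_zero, Real.zero_rpow hp.ne']
    rw [integral_congr_ae (Filter.Eventually.of_forall key1), hvol,
      Real.rpow_add hε, Real.rpow_one, Real.div_rpow hε.le (by norm_num : (0:ℝ) ≤ 2)]
    ring
  · have hmz : (volume : Measure ℝ) {(1/2 : ℝ), b} = 0 :=
      Set.Finite.measure_zero (Set.toFinite _) volume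
    have hae : ∀ᵐ x ∂(volume.restrict (Set.Icc (0:ℝ) 1)),
        x ∉ ({(1/2 : ℝ), b} : Set ℝ) :=
      ae_restrict_of_ae (measure_eq_zero_iff_ae_notMem.mp hmz)
    have key2 : ∀ x : ℝ, x ∉ ({(1/2 : ℝ), b} : Set ℝ) →
        |Set.indicator (Set.Ici (1 / 2 : ℝ)) (fun _ => (1 : ℝ)) x -
         Set.indicator (Set.Ici (1 / 2 : ℝ)) (fun _ => (1 : ℝ))
           (if x ∈ Set.Icc a (1 / 2) then x + ε / 2
            else if x ∈ Set.Ioc (1 / 2 : ℝ) b then x - ε / 2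
            else x)|
        = (Set.Icc a b).indicator (fun _ => (1 : ℝ)) x := by
      intro x hx
      simp only [Set.mem_insert_iff, Set.mem_singleton_iff, not_or] at hx
      obtain ⟨hx1, hxb⟩ := hx
      by_cases h1 : x ∈ Set.Icc a (1 / 2)
      · have hxlt : x < 1 / 2 := lt_of_le_of_ne h1.2 hx1
        have hna : x ∉ Set.Ici (1 / 2 : ℝ) := by simp only [Set.mem_Ici, not_le]; exact hxlt
        have hma : x + ε / 2 ∈ Set.Ici (1 / 2 : ℝ) := by
          simp only [Set.mem_Ici]; have := h1.1; rw [ha] at this; linarith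
        rw [if_pos h1, Set.indicator_of_notMem hna, Set.indicator_of_mem hma,
          Set.indicator_of_mem (hmem1 x h1)]
        norm_num
      · rw [if_neg h1]
        by_cases h2 : x ∈ Set.Ioc (1 / 2 : ℝ) b
        · have hxlt : x < b := lt_of_le_of_ne h2.2 hxb
          have hma : x ∈ Set.Ici (1 / 2 : ℝ) := Set.mem_Ici.mpr h2.1.le
          have hna : x - ε / 2 ∉ Set.Ici (1 / 2 : ℝ) := by
            simp only [Set.mem_Ici, not_le]; rw [hb] at hxlt; linarith
          rw [if_pos h2, Set.indicator_of_mem hma, Set.indicator_of_notMem hna,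
            Set.indicator_of_mem (hmem2 x h2)]
          norm_num
        · rw [if_neg h2, sub_self, abs_zero,
            Set.indicator_of_notMem (hnmem x h1 h2)]
    rw [integral_congr_ae (hae.mono key2), hvol, mul_one]
end

section
/- Fix p ∈ [1,∞) and a bump function φ (i.e., 0 < φ ≤ 1, φ increasing on (−∞,0], decreasing on (0,∞), φ(z) → 0 as |z| → ∞). Then the decomposition g = c + g^μ + Δ_A of a function g in the class G_{p,φ} is unique: if c₁ + g^{μ₁} + Δ_{A₁} = c₂ + g^{μ₂} + Δ_{A₂} pointwise, then c₁ = c₂, g^{μ₁} = g^{μ₂}, and Δ_{A₁} = Δ_{A₂}. -/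
open MeasureTheory Filter Set Topology

/-- A bump function: strictly positive, at most `1`, increasing on `(−∞,0]`,
decreasing on `(0,∞)`, vanishing at `±∞`. -/
def IsBump (φ : ℝ → ℝ) : Prop :=
  (∀ z, 0 < φ z) ∧ (∀ z, φ z ≤ 1) ∧ MonotoneOn φ (Set.Iic (0 : ℝ)) ∧
    AntitoneOn φ (Set.Ioi (0 : ℝ)) ∧
    Tendsto φ atTop (nhds 0) ∧ Tendsto φ atBot (nhds 0)

/-- The function `g^μ(x) = ∫_{(0,x]} φ dμ` (for `x ≥ 0`), `= ∫_{(x,0]} φ dμ` (for `x < 0`),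
where the (σ-finite) signed measure `μ` is represented by its Jordan pair `(μp, μn)`. -/
noncomputable def gMu (φ : ℝ → ℝ) (μp μn : Measure ℝ) (x : ℝ) : ℝ :=
  if 0 ≤ x then (∫ z in Set.Ioc 0 x, φ z ∂μp) - ∫ z in Set.Ioc 0 x, φ z ∂μn
  else (∫ z in Set.Ioc x 0, φ z ∂μp) - ∫ z in Set.Ioc x 0, φ z ∂μn

/-- `IsGRep p φ g c μp μn Δ` says that `g = c + g^μ + Δ_A` is a representation of `g`
in the class `G_{p,φ}`: `μ = μp − μn` is a signed measure with σ-finite total variation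
`|μ| = μp + μn` (`μp ⟂ μn`), `φ` is locally `|μ|`-integrable and `|μ|`-integrable when
raised to the power `1 + 1/p`, and the jump part `Δ` (with `Δ(a_i) = λ_i φ(a_i)`) is
supported on a countable set with `∑ |λ_i| φ(a_i)^{1+1/p} = ∑ |Δ(a_i)| φ(a_i)^{1/p} < ∞`. -/
def IsGRep (p : ℝ) (φ : ℝ → ℝ) (g : ℝ → ℝ)
    (c : ℝ) (μp μn : Measure ℝ) (Δ : ℝ → ℝ) : Prop :=
  SigmaFinite μp ∧ SigmaFinite μn ∧ Measure.MutuallySingular μp μn ∧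
  (∀ x : ℝ, IntegrableOn φ (Set.Ioc 0 x) μp ∧ IntegrableOn φ (Set.Ioc x 0) μp ∧
            IntegrableOn φ (Set.Ioc 0 x) μn ∧ IntegrableOn φ (Set.Ioc x 0) μn) ∧
  Integrable (fun z => φ z ^ (1 + 1 / p)) (μp + μn) ∧
  (Function.support Δ).Countable ∧
  Summable (fun x : ℝ => |Δ x| * φ x ^ (1 / p)) ∧
  ∀ x, g x = c + gMu φ μp μn x + Δ x

/-- Membership in the class `G_{p,φ}`. -/
def MemG (p : ℝ) (φ : ℝ → ℝ) (g : ℝ → ℝ) : Prop :=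
  ∃ c μp μn Δ, IsGRep p φ g c μp μn Δ

/-- The `(p,φ)`-variation `V_{p,φ}(g) = ∫ φ^{1+1/p} d|μ| + ∑ |λ_i| φ(a_i)^{1+1/p}`
of a representation. -/
noncomputable def Vpphi (p : ℝ) (φ : ℝ → ℝ) (μp μn : Measure ℝ) (Δ : ℝ → ℝ) : ℝ :=
  (∫ z, φ z ^ (1 + 1 / p) ∂(μp + μn)) + ∑' x : ℝ, |Δ x| * φ x ^ (1 / p)

/-! ### Auxiliary lemmas for the uniqueness proof -/

/-- A set on which `φ` is bounded below by a positive constant and `φ` is integrable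
has finite measure. -/
lemma measure_lt_top_of_pos_lb {φ : ℝ → ℝ} {ν : Measure ℝ} {s : Set ℝ} {m : ℝ}
    (hm : 0 < m) (hlb : ∀ z ∈ s, m ≤ φ z) (hms : MeasurableSet s)
    (hint : IntegrableOn φ s ν) : ν s < ⊤ := by
  by_contra h
  have h' : ν s = ⊤ := by simpa using h
  have hfin := hint.hasFiniteIntegral
  have hmono : ∫⁻ _, ENNReal.ofReal m ∂(ν.restrict s) ≤ ∫⁻ z, ‖φ z‖₊ ∂(ν.restrict s) := by
    refine lintegral_mono_ae ?_
    filter_upwards [ae_restrict_mem hms] with z hz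
    exact le_trans (ENNReal.ofReal_le_ofReal (hlb z hz)) (Real.ofReal_le_enorm _)
  rw [lintegral_const, Measure.restrict_apply_univ, h',
    ENNReal.mul_top (by simp [ENNReal.ofReal_eq_zero]; linarith)] at hmono
  exact absurd (hmono.trans_lt hfin) (lt_irrefl _)

/-- Under the integrability assumptions of `IsGRep`, every bounded interval has
finite measure. -/
lemma bump_measure_Ioc_lt_top {φ : ℝ → ℝ} (hφ : IsBump φ) (ν : Measure ℝ)
    (hint : ∀ x : ℝ, IntegrableOn φ (Set.Ioc 0 x) ν ∧ IntegrableOn φ (Set.Ioc x 0) ν)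
    (a b : ℝ) : ν (Set.Ioc a b) < ⊤ := by
  obtain ⟨hpos, hle, hmono, hanti, _, _⟩ := hφ
  have hsub : Set.Ioc a b ⊆ Set.Ioc (min a 0) 0 ∪ Set.Ioc 0 (max b 1) := by
    intro z hz
    rcases le_or_gt z 0 with hz0 | hz0
    · exact Or.inl ⟨lt_of_le_of_lt (min_le_left a 0) hz.1, hz0⟩
    · exact Or.inr ⟨hz0, le_trans hz.2 (le_max_left b 1)⟩
  have h1 : ν (Set.Ioc (min a 0) 0) < ⊤ := by
    refine measure_lt_top_of_pos_lb (hpos (min a 0)) ?_ measurableSet_Ioc (hint (min a 0)).2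
    intro z hz
    exact hmono (Set.mem_Iic.mpr (le_trans (min_le_right a 0) (le_refl 0))) hz.2 hz.1.le
  have h2 : ν (Set.Ioc 0 (max b 1)) < ⊤ := by
    refine measure_lt_top_of_pos_lb (hpos (max b 1)) ?_ measurableSet_Ioc (hint (max b 1)).1
    intro z hz
    exact hanti hz.1 (lt_of_lt_of_le hz.1 hz.2) hz.2
  calc ν (Set.Ioc a b) ≤ ν (Set.Ioc (min a 0) 0 ∪ Set.Ioc 0 (max b 1)) := measure_mono hsub
    _ ≤ ν (Set.Ioc (min a 0) 0) + ν (Set.Ioc 0 (max b 1)) := measure_union_le _ _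
    _ < ⊤ := ENNReal.add_lt_top.mpr ⟨h1, h2⟩

/-- One-measure version of `gMu`. -/
noncomputable def gNu (φ : ℝ → ℝ) (ν : Measure ℝ) (x : ℝ) : ℝ :=
  if 0 ≤ x then ∫ z in Set.Ioc 0 x, φ z ∂ν else ∫ z in Set.Ioc x 0, φ z ∂ν

lemma gMu_eq_gNu (φ : ℝ → ℝ) (μp μn : Measure ℝ) (x : ℝ) :
    gMu φ μp μn x = gNu φ μp x - gNu φ μn x := by
  unfold gMu gNu; split_ifs <;> ring

/-- `gNu` is right-continuous. -/
lemma gNu_tendsto {φ : ℝ → ℝ} (hφ : IsBump φ) (ν : Measure ℝ)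
    (hint : ∀ x : ℝ, IntegrableOn φ (Set.Ioc 0 x) ν ∧ IntegrableOn φ (Set.Ioc x 0) ν)
    (x : ℝ) : Tendsto (gNu φ ν) (𝓝[>] x) (𝓝 (gNu φ ν x)) := by
  obtain ⟨hpos, hle, hmono, hanti, _, _⟩ := hφ
  have hfin : ∀ a b : ℝ, ν (Set.Ioc a b) < ⊤ :=
    bump_measure_Ioc_lt_top ⟨hpos, hle, hmono, hanti, by assumption, by assumption⟩ ν hint
  -- the measure of the small interval tends to zero
  have hmeas : Tendsto (fun y => (ν (Set.Ioc x y)).toReal) (𝓝[>] x) (𝓝 0) := by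
    have h1 : Tendsto (fun y => ν (Set.Ioc x y)) (𝓝[>] x) (𝓝 0) := by
      have ht := tendsto_measure_biInter_gt (μ := ν) (s := fun y => Set.Ioc x y) (a := x)
        (fun r _ => measurableSet_Ioc.nullMeasurableSet)
        (fun i j _ hij => Set.Ioc_subset_Ioc_right hij)
        ⟨x + 1, by linarith, (hfin x (x + 1)).ne⟩
      have hempty : ⋂ r > x, Set.Ioc x r = (∅ : Set ℝ) := by
        ext z
        simp only [Set.mem_iInter, Set.mem_Ioc, Set.mem_empty_iff_false, iff_false, not_forall]
        by_contra hcon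
        push_neg at hcon
        have hx : x < z := (hcon (x + 1) (by linarith)).1
        have h2 := (hcon ((x + z) / 2) (by linarith)).2
        linarith
      rw [hempty, measure_empty] at ht
      exact ht
    have h2 := (ENNReal.tendsto_toReal (a := 0) (by simp)).comp h1
    simpa [Function.comp_def] using h2
  -- the key eventual bound
  have hev : ∀ᶠ y in 𝓝[>] x, ‖gNu φ ν y - gNu φ ν x‖ ≤ (ν (Set.Ioc x y)).toReal := by
    have hintbd : ∀ a b : ℝ, ‖∫ z in Set.Ioc a b, φ z ∂ν‖ ≤ (ν (Set.Ioc a b)).toReal := by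
      intro a b
      calc ‖∫ z in Set.Ioc a b, φ z ∂ν‖ ≤ 1 * (ν (Set.Ioc a b)).toReal :=
            norm_setIntegral_le_of_norm_le_const_ae (hfin a b)
              (Filter.Eventually.of_forall fun z => by
                rw [Real.norm_eq_abs, abs_of_pos (hpos z)]; exact hle z)
        _ = (ν (Set.Ioc a b)).toReal := one_mul _
    rcases le_or_gt 0 x with hx | hx
    · filter_upwards [self_mem_nhdsWithin] with y hy
      have hxy : x < y := hy
      have h0y : 0 ≤ y := le_of_lt (lt_of_le_of_lt hx hxy)
      have hsplit : ∫ z in Set.Ioc 0 y, φ z ∂ν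
          = (∫ z in Set.Ioc 0 x, φ z ∂ν) + ∫ z in Set.Ioc x y, φ z ∂ν := by
        rw [← Set.Ioc_union_Ioc_eq_Ioc hx hxy.le,
          setIntegral_union (Set.Ioc_disjoint_Ioc_of_le le_rfl) measurableSet_Ioc
            (hint x).1 ((hint y).1.mono_set (Set.Ioc_subset_Ioc_left hx))]
      rw [gNu, gNu, if_pos h0y, if_pos hx, hsplit, add_sub_cancel_left]
      exact hintbd x y
    · filter_upwards [Ioo_mem_nhdsGT_of_mem ⟨le_refl x, hx⟩] with y hy
      have hxy : x < y := hy.1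
      have hy0 : y < 0 := hy.2
      have hsplit : ∫ z in Set.Ioc x 0, φ z ∂ν
          = (∫ z in Set.Ioc x y, φ z ∂ν) + ∫ z in Set.Ioc y 0, φ z ∂ν := by
        rw [← Set.Ioc_union_Ioc_eq_Ioc hxy.le hy0.le,
          setIntegral_union (Set.Ioc_disjoint_Ioc_of_le le_rfl) measurableSet_Ioc
            ((hint x).2.mono_set (Set.Ioc_subset_Ioc_right hy0.le)) (hint y).2]
      rw [gNu, gNu, if_neg (not_le.mpr hy0), if_neg (not_le.mpr hx), hsplit]
      have heq : (∫ z in Set.Ioc y 0, φ z ∂ν)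
          - ((∫ z in Set.Ioc x y, φ z ∂ν) + ∫ z in Set.Ioc y 0, φ z ∂ν)
          = -(∫ z in Set.Ioc x y, φ z ∂ν) := by ring
      rw [heq, norm_neg]
      exact hintbd x y
  have h2 : Tendsto (fun y => ‖gNu φ ν y - gNu φ ν x‖) (𝓝[>] x) (𝓝 0) :=
    squeeze_zero' (Filter.Eventually.of_forall fun _ => norm_nonneg _) hev hmeas
  have h3 : Tendsto (fun y => gNu φ ν y - gNu φ ν x) (𝓝[>] x) (𝓝 0) :=
    tendsto_zero_iff_norm_tendsto_zero.mpr h2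
  have h4 := h3.add_const (gNu φ ν x)
  simpa using h4

/-- Uniqueness of the decomposition `g = c + g^μ + Δ_A` of a function in `G_{p,φ}`. -/
theorem G_decomposition_unique (p : ℝ) (hp : 1 ≤ p) (φ : ℝ → ℝ) (hφ : IsBump φ)
    (g : ℝ → ℝ) (c₁ c₂ : ℝ) (μp₁ μn₁ μp₂ μn₂ : Measure ℝ) (Δ₁ Δ₂ : ℝ → ℝ)
    (h₁ : IsGRep p φ g c₁ μp₁ μn₁ Δ₁) (h₂ : IsGRep p φ g c₂ μp₂ μn₂ Δ₂) :
    c₁ = c₂ ∧ (∀ x, gMu φ μp₁ μn₁ x = gMu φ μp₂ μn₂ x) ∧ Δ₁ = Δ₂ := by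
  obtain ⟨_, _, _, hint₁, _, hsupp₁, _, heq₁⟩ := h₁
  obtain ⟨_, _, _, hint₂, _, hsupp₂, _, heq₂⟩ := h₂
  set S : Set ℝ := Function.support Δ₁ ∪ Function.support Δ₂ with hSdef
  have hScount : S.Countable := hsupp₁.union hsupp₂
  -- key step: the difference of the two `gMu` parts is constant
  have key : ∀ x, gMu φ μp₁ μn₁ x - gMu φ μp₂ μn₂ x = c₂ - c₁ := by
    intro x
    have hcl : x ∈ closure (Set.Ioi x \ S) := by
      rw [Metric.mem_closure_iff]
      intro ε hε
      have hnsub : ¬ (Set.Ioo x (x + ε) ⊆ S) := by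
        intro hsub
        have h0 : volume (Set.Ioo x (x + ε)) = 0 :=
          measure_mono_null hsub (hScount.measure_zero volume)
        rw [Real.volume_Ioo] at h0
        rw [ENNReal.ofReal_eq_zero] at h0
        linarith
      obtain ⟨y, hy, hyS⟩ := Set.not_subset.mp hnsub
      refine ⟨y, ⟨hy.1, hyS⟩, ?_⟩
      rw [Real.dist_eq, abs_of_neg (by linarith [hy.1] : x - y < 0)]
      linarith [hy.2]
    haveI hne : (𝓝[Set.Ioi x \ S] x).NeBot := mem_closure_iff_nhdsWithin_neBot.mp hcl
    have hmonoF : 𝓝[Set.Ioi x \ S] x ≤ 𝓝[>] x := nhdsWithin_mono x Set.diff_subset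
    have ht1 : Tendsto (fun y => gMu φ μp₁ μn₁ y - gMu φ μp₂ μn₂ y) (𝓝[Set.Ioi x \ S] x)
        (𝓝 (gMu φ μp₁ μn₁ x - gMu φ μp₂ μn₂ x)) := by
      refine Tendsto.mono_left ?_ hmonoF
      have e1 := gNu_tendsto hφ μp₁ (fun t => ⟨(hint₁ t).1, (hint₁ t).2.1⟩) x
      have e2 := gNu_tendsto hφ μn₁ (fun t => ⟨(hint₁ t).2.2.1, (hint₁ t).2.2.2⟩) x
      have e3 := gNu_tendsto hφ μp₂ (fun t => ⟨(hint₂ t).1, (hint₂ t).2.1⟩) x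
      have e4 := gNu_tendsto hφ μn₂ (fun t => ⟨(hint₂ t).2.2.1, (hint₂ t).2.2.2⟩) x
      have := (e1.sub e2).sub (e3.sub e4)
      simpa only [← gMu_eq_gNu] using this
    have ht2 : Tendsto (fun y => gMu φ μp₁ μn₁ y - gMu φ μp₂ μn₂ y) (𝓝[Set.Ioi x \ S] x)
        (𝓝 (c₂ - c₁)) := by
      refine Tendsto.congr' ?_ tendsto_const_nhds
      filter_upwards [self_mem_nhdsWithin] with y hy
      have hΔ₁ : Δ₁ y = 0 := Function.notMem_support.mp fun h => hy.2 (Or.inl h)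
      have hΔ₂ : Δ₂ y = 0 := Function.notMem_support.mp fun h => hy.2 (Or.inr h)
      have ha := heq₁ y
      have hb := heq₂ y
      rw [hΔ₁] at ha
      rw [hΔ₂] at hb
      linarith
    exact tendsto_nhds_unique ht1 ht2
  have h0 : ∀ μp μn : Measure ℝ, gMu φ μp μn 0 = 0 := by
    intro μp μn
    simp [gMu, Set.Ioc_self]
  have hc : c₁ = c₂ := by
    have hk := key 0
    rw [h0 μp₁ μn₁, h0 μp₂ μn₂] at hk
    linarith
  have hg : ∀ x, gMu φ μp₁ μn₁ x = gMu φ μp₂ μn₂ x := by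
    intro x
    have hk := key x
    rw [hc] at hk
    linarith
  refine ⟨hc, hg, funext fun x => ?_⟩
  have ha := heq₁ x
  have hb := heq₂ x
  have hgx := hg x
  rw [hc] at ha
  linarith
end

section
/- Fix p ∈ [1,∞) and a bump function φ. Then every function g of bounded variation on ℝ belongs to the class G_{p,φ}, with V_{p,φ}(g) bounded by a constant multiple depending only on V(g). -/
open MeasureTheory Filter Set

open scoped Topology ENNReal NNReal
open Function

/-! ### Auxiliary lemmas -/

/-- A bump function is measurable. -/
lemma bump_measurable {φ : ℝ → ℝ} (hmono : MonotoneOn φ (Set.Iic (0 : ℝ)))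
    (hanti : AntitoneOn φ (Set.Ioi (0 : ℝ))) : Measurable φ := by
  apply measurable_of_Ioi
  intro c
  have h1 : OrdConnected (φ ⁻¹' Ioi c ∩ Iic 0) := by
    constructor
    intro x hx z hz y hy
    exact ⟨lt_of_lt_of_le hx.1 (hmono hx.2 (hy.2.trans hz.2) hy.1), hy.2.trans hz.2⟩
  have h2 : OrdConnected (φ ⁻¹' Ioi c ∩ Ioi 0) := by
    constructor
    intro x hx z hz y hy
    exact ⟨lt_of_lt_of_le hz.1 (hanti (lt_of_lt_of_le hx.2 hy.1) hz.2 hy.2),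
      lt_of_lt_of_le hx.2 hy.1⟩
  have : φ ⁻¹' Ioi c = (φ ⁻¹' Ioi c ∩ Iic 0) ∪ (φ ⁻¹' Ioi c ∩ Ioi 0) := by
    rw [← Set.inter_union_distrib_left, Iic_union_Ioi, inter_univ]
  rw [this]
  exact h1.measurableSet.union h2.measurableSet

lemma monotone_le_stieltjes {a : ℝ → ℝ} (ha : Monotone a) (x : ℝ) :
    a x ≤ ha.stieltjesFunction x := by
  rw [ha.stieltjesFunction_eq]
  exact ha.le_rightLim le_rfl

lemma stieltjes_le_monotone {a : ℝ → ℝ} (ha : Monotone a) {x y : ℝ} (hxy : x < y) :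
    ha.stieltjesFunction x ≤ a y := by
  rw [ha.stieltjesFunction_eq]
  exact ha.rightLim_le hxy

lemma stieltjes_jump_le {a : ℝ → ℝ} (ha : Monotone a) (x : ℝ) :
    ha.stieltjesFunction x - a x ≤ (ha.stieltjesFunction.measure {x}).toReal := by
  rw [StieltjesFunction.measure_singleton,
    ENNReal.toReal_ofReal (sub_nonneg.2 (ha.stieltjesFunction.mono.leftLim_le le_rfl))]
  have h1 : leftLim (⇑ha.stieltjesFunction) x ≤ a x := by
    apply le_of_tendsto (ha.stieltjesFunction.mono.tendsto_leftLim x)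
    filter_upwards [self_mem_nhdsWithin] with y (hy : y ∈ Iio x)
    exact stieltjes_le_monotone ha hy
  linarith

lemma stieltjes_tendsto {a : ℝ → ℝ} (ha : Monotone a) {L : Filter ℝ}
    (hL : Tendsto (fun x : ℝ => x + 1) L L) {l : ℝ} (h : Tendsto a L (𝓝 l)) :
    Tendsto (⇑ha.stieltjesFunction) L (𝓝 l) :=
  tendsto_of_tendsto_of_tendsto_of_le_of_le h (h.comp hL)
    (fun x => monotone_le_stieltjes ha x) (fun x => stieltjes_le_monotone ha (lt_add_one x))

lemma stieltjes_eq_of_continuousAt {a : ℝ → ℝ} (ha : Monotone a) {x : ℝ}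
    (h : ContinuousAt a x) : ha.stieltjesFunction x = a x := by
  rw [ha.stieltjesFunction_eq]
  exact rightLim_eq_of_tendsto (h := nhdsGT_neBot x)
    (h.continuousWithinAt : ContinuousWithinAt a (Ioi x) x)

lemma finset_sum_singleton_le {ρ : Measure ℝ} [IsFiniteMeasure ρ] (F : Finset ℝ) :
    ∑ x ∈ F, (ρ {x}).toReal ≤ (ρ univ).toReal := by
  rw [← ENNReal.toReal_sum (fun _ _ => measure_ne_top ρ _)]
  apply ENNReal.toReal_mono (measure_ne_top ρ _)
  calc ∑ x ∈ F, ρ {x} = ρ (⋃ x ∈ F, {x}) :=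
        (measure_biUnion_finset (fun x _ y _ hxy => by simpa using hxy)
          (fun _ _ => measurableSet_singleton _)).symm
    _ ≤ ρ univ := measure_mono (subset_univ _)

/-- Every function of bounded variation belongs to `G_{p,φ}`, with a representation whose
`(p,φ)`-variation is bounded by a constant multiple of the total variation `V(g)`. -/
theorem bv_subset_G (p : ℝ) (hp : 1 ≤ p) (φ : ℝ → ℝ) (hφ : IsBump φ)
    (g : ℝ → ℝ) (V : ℝ) (hg : eVariationOn g Set.univ = ENNReal.ofReal V) (hV : 0 ≤ V) :
    ∃ c μp μn Δ, IsGRep p φ g c μp μn Δ ∧ Vpphi p φ μp μn Δ ≤ 2 * V := by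
  classical
  obtain ⟨hpos, hle1, hmonoφ, hantiφ, -, -⟩ := hφ
  have hφm : Measurable φ := bump_measurable hmonoφ hantiφ
  have h1p : (0:ℝ) ≤ 1 / p := by positivity
  have hVne : eVariationOn g univ ≠ ⊤ := by rw [hg]; exact ENNReal.ofReal_ne_top
  have hlbv : LocallyBoundedVariationOn g univ := fun a b _ _ =>
    ne_top_of_le_ne_top hVne (eVariationOn.mono g inter_subset_left)
  have hvadd : ∀ x y : ℝ,
      variationOnFromTo g univ 0 x + variationOnFromTo g univ x y
        = variationOnFromTo g univ 0 y :=
    fun x y => variationOnFromTo.add hlbv (mem_univ 0) (mem_univ x) (mem_univ y)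
  have hvarV : ∀ x y : ℝ, x ≤ y → variationOnFromTo g univ x y ≤ V := by
    intro x y hxy
    rw [variationOnFromTo.eq_of_le g univ hxy]
    calc (eVariationOn g (univ ∩ Icc x y)).toReal ≤ (eVariationOn g univ).toReal :=
          ENNReal.toReal_mono hVne (eVariationOn.mono g inter_subset_left)
      _ = V := by rw [hg, ENNReal.toReal_ofReal hV]
  have habs : ∀ x y : ℝ, x ≤ y → |g y - g x| ≤ variationOnFromTo g univ x y := by
    intro x y hxy
    rw [variationOnFromTo.eq_of_le g univ hxy]
    have h1 : edist (g x) (g y) ≤ eVariationOn g (univ ∩ Icc x y) :=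
      eVariationOn.edist_le g ⟨mem_univ x, le_rfl, hxy⟩ ⟨mem_univ y, hxy, le_rfl⟩
    rw [edist_dist] at h1
    have h2 := (ENNReal.ofReal_le_iff_le_toReal (hlbv x y (mem_univ x) (mem_univ y))).1 h1
    rwa [Real.dist_eq, abs_sub_comm] at h2
  -- the two monotone parts of `g`
  set a : ℝ → ℝ := fun x => (variationOnFromTo g univ 0 x + (g x - g 0)) / 2 with ha_def
  set b : ℝ → ℝ := fun x => (variationOnFromTo g univ 0 x - (g x - g 0)) / 2 with hb_def
  have hab : ∀ x, a x - b x = g x - g 0 := by intro x; simp only [ha_def, hb_def]; ring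
  have hmono_a : Monotone a := by
    intro x y hxy
    have h3 := abs_le.1 (habs x y hxy)
    have h2 := hvadd x y
    simp only [ha_def]
    linarith [h3.1]
  have hmono_b : Monotone b := by
    intro x y hxy
    have h3 := abs_le.1 (habs x y hxy)
    have h2 := hvadd x y
    simp only [hb_def]
    linarith [h3.2]
  have hva : ∀ x y : ℝ, x ≤ y → a y - a x ≤ V := by
    intro x y hxy
    have h3 := abs_le.1 (habs x y hxy)
    have h2 := hvadd x y
    have h4 := hvarV x y hxy
    simp only [ha_def]
    linarith [h3.2]
  have hvb : ∀ x y : ℝ, x ≤ y → b y - b x ≤ V := by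
    intro x y hxy
    have h3 := abs_le.1 (habs x y hxy)
    have h2 := hvadd x y
    have h4 := hvarV x y hxy
    simp only [hb_def]
    linarith [h3.1]
  have ha0 : a 0 = 0 := by simp [ha_def, variationOnFromTo.self]
  have hb0 : b 0 = 0 := by simp [hb_def, variationOnFromTo.self]
  have hbdd_a : ∀ x, -V ≤ a x ∧ a x ≤ V := by
    intro x
    rcases le_total x 0 with h | h
    · have h1 := hmono_a h
      have h2 := hva x 0 h
      rw [ha0] at h1 h2
      constructor <;> linarith
    · have h1 := hmono_a h
      have h2 := hva 0 x h
      rw [ha0] at h1 h2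
      constructor <;> linarith
  have hbdd_b : ∀ x, -V ≤ b x ∧ b x ≤ V := by
    intro x
    rcases le_total x 0 with h | h
    · have h1 := hmono_b h
      have h2 := hvb x 0 h
      rw [hb0] at h1 h2
      constructor <;> linarith
    · have h1 := hmono_b h
      have h2 := hvb 0 x h
      rw [hb0] at h1 h2
      constructor <;> linarith
  have hbddA_a : BddAbove (range a) := ⟨V, by rintro _ ⟨x, rfl⟩; exact (hbdd_a x).2⟩
  have hbddB_a : BddBelow (range a) := ⟨-V, by rintro _ ⟨x, rfl⟩; exact (hbdd_a x).1⟩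
  have hbddA_b : BddAbove (range b) := ⟨V, by rintro _ ⟨x, rfl⟩; exact (hbdd_b x).2⟩
  have hbddB_b : BddBelow (range b) := ⟨-V, by rintro _ ⟨x, rfl⟩; exact (hbdd_b x).1⟩
  set sa : ℝ := ⨆ x, a x with hsa_def
  set ia : ℝ := ⨅ x, a x with hia_def
  set sb : ℝ := ⨆ x, b x with hsb_def
  set ib : ℝ := ⨅ x, b x with hib_def
  have hta_top : Tendsto a atTop (𝓝 sa) := tendsto_atTop_ciSup hmono_a hbddA_a
  have hta_bot : Tendsto a atBot (𝓝 ia) := tendsto_atBot_ciInf hmono_a hbddB_a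
  have htb_top : Tendsto b atTop (𝓝 sb) := tendsto_atTop_ciSup hmono_b hbddA_b
  have htb_bot : Tendsto b atBot (𝓝 ib) := tendsto_atBot_ciInf hmono_b hbddB_b
  have hia_sa : ia ≤ sa := le_trans (ciInf_le hbddB_a 0) (le_ciSup hbddA_a 0)
  have hib_sb : ib ≤ sb := le_trans (ciInf_le hbddB_b 0) (le_ciSup hbddA_b 0)
  set Fa := hmono_a.stieltjesFunction with hFa_def
  set Fb := hmono_b.stieltjesFunction with hFb_def
  set νa := Fa.measure with hνa_def
  set νb := Fb.measure with hνb_def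
  have hFa_top : Tendsto (⇑Fa) atTop (𝓝 sa) :=
    stieltjes_tendsto hmono_a (tendsto_atTop_add_const_right _ 1 tendsto_id) hta_top
  have hFa_bot : Tendsto (⇑Fa) atBot (𝓝 ia) :=
    stieltjes_tendsto hmono_a (tendsto_atBot_add_const_right _ 1 tendsto_id) hta_bot
  have hFb_top : Tendsto (⇑Fb) atTop (𝓝 sb) :=
    stieltjes_tendsto hmono_b (tendsto_atTop_add_const_right _ 1 tendsto_id) htb_top
  have hFb_bot : Tendsto (⇑Fb) atBot (𝓝 ib) :=
    stieltjes_tendsto hmono_b (tendsto_atBot_add_const_right _ 1 tendsto_id) htb_bot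
  have hνa_univ : νa univ = ENNReal.ofReal (sa - ia) :=
    StieltjesFunction.measure_univ _ hFa_bot hFa_top
  have hνb_univ : νb univ = ENNReal.ofReal (sb - ib) :=
    StieltjesFunction.measure_univ _ hFb_bot hFb_top
  haveI : IsFiniteMeasure νa := ⟨by rw [hνa_univ]; exact ENNReal.ofReal_lt_top⟩
  haveI : IsFiniteMeasure νb := ⟨by rw [hνb_univ]; exact ENNReal.ofReal_lt_top⟩
  -- the signed measure and its Jordan decomposition
  set ν1 : Measure ℝ := νa.restrict (Ioi 0) + νb.restrict (Iic 0) with hν1_def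
  set ν2 : Measure ℝ := νb.restrict (Ioi 0) + νa.restrict (Iic 0) with hν2_def
  haveI : IsFiniteMeasure ν1 := by rw [hν1_def]; infer_instance
  haveI : IsFiniteMeasure ν2 := by rw [hν2_def]; infer_instance
  set s : SignedMeasure ℝ := ν1.toSignedMeasure - ν2.toSignedMeasure with hs_def
  set J := s.toJordanDecomposition with hJ_def
  set μP := J.posPart with hμP_def
  set μN := J.negPart with hμN_def
  haveI : IsFiniteMeasure μP := J.posPart_finite
  haveI : IsFiniteMeasure μN := J.negPart_finite
  have hs_apply : ∀ A : Set ℝ, MeasurableSet A →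
      (μP A).toReal - (μN A).toReal = (ν1 A).toReal - (ν2 A).toReal := by
    intro A hA
    have h0 : J.toSignedMeasure = s := s.toSignedMeasure_toJordanDecomposition
    have h1 : J.toSignedMeasure A = s A := by rw [h0]
    rw [JordanDecomposition.toSignedMeasure] at h1
    rw [hs_def] at h1
    rw [Measure.toSignedMeasure_sub_apply hA, Measure.toSignedMeasure_sub_apply hA] at h1
    exact h1
  -- the density `1/φ`
  set w : ℝ → ℝ≥0 := fun z => Real.toNNReal (φ z)⁻¹ with hw_def
  have hw : Measurable w := measurable_real_toNNReal.comp hφm.inv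
  have hwcoe : ∀ z, ((w z : ℝ≥0) : ℝ) = (φ z)⁻¹ :=
    fun z => Real.coe_toNNReal _ (inv_nonneg.2 (hpos z).le)
  have hone : ∀ z, w z • φ z = (1:ℝ) := by
    intro z
    rw [NNReal.smul_def, smul_eq_mul, hwcoe z, inv_mul_cancel₀ (hpos z).ne']
  set μp : Measure ℝ := μP.withDensity (fun z => ((w z : ℝ≥0) : ℝ≥0∞)) with hμp_def
  set μn : Measure ℝ := μN.withDensity (fun z => ((w z : ℝ≥0) : ℝ≥0∞)) with hμn_def
  -- integrals with respect to the density measures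
  have hint : ∀ (ρ : Measure ℝ), IsFiniteMeasure ρ → ∀ A : Set ℝ, MeasurableSet A →
      IntegrableOn φ A (ρ.withDensity (fun z => ((w z : ℝ≥0) : ℝ≥0∞))) ∧
      ∫ z in A, φ z ∂(ρ.withDensity (fun z => ((w z : ℝ≥0) : ℝ≥0∞))) = (ρ A).toReal := by
    intro ρ hρ A hA
    haveI := hρ
    have he : (fun z => w z • φ z) = fun _ => (1:ℝ) := funext hone
    constructor
    · rw [IntegrableOn, restrict_withDensity hA,
        integrable_withDensity_iff_integrable_smul hw, he]
      exact integrable_const 1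
    · rw [restrict_withDensity hA, integral_withDensity_eq_integral_smul hw, he,
        integral_const, measureReal_restrict_apply_univ, smul_eq_mul, mul_one, measureReal_def]
  -- value of `gMu`
  have hgMu : ∀ x : ℝ, gMu φ μp μn x = (Fa x - Fa 0) - (Fb x - Fb 0) := by
    intro x
    rcases le_or_gt 0 x with hx | hx
    · rw [gMu, if_pos hx, (hint μP inferInstance _ measurableSet_Ioc).2,
        (hint μN inferInstance _ measurableSet_Ioc).2]
      have h1 : (μP (Ioc 0 x)).toReal - (μN (Ioc 0 x)).toReal
          = (ν1 (Ioc 0 x)).toReal - (ν2 (Ioc 0 x)).toReal := hs_apply _ measurableSet_Ioc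
      have h2 : Ioc (0:ℝ) x ∩ Ioi 0 = Ioc 0 x := by
        rw [inter_eq_left]; exact Ioc_subset_Ioi_self
      have h3 : Ioc (0:ℝ) x ∩ Iic 0 = ∅ := by
        ext z; simp only [mem_inter_iff, mem_Ioc, mem_Iic, mem_empty_iff_false, iff_false]
        rintro ⟨⟨h4, -⟩, h5⟩; exact absurd (h4.trans_le h5) (lt_irrefl 0)
      have h4 : ν1 (Ioc 0 x) = νa (Ioc 0 x) := by
        rw [hν1_def, Measure.add_apply, Measure.restrict_apply measurableSet_Ioc,
          Measure.restrict_apply measurableSet_Ioc, h2, h3, measure_empty, add_zero]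
      have h5 : ν2 (Ioc 0 x) = νb (Ioc 0 x) := by
        rw [hν2_def, Measure.add_apply, Measure.restrict_apply measurableSet_Ioc,
          Measure.restrict_apply measurableSet_Ioc, h2, h3, measure_empty, add_zero]
      rw [h1, h4, h5, hνa_def, hνb_def, StieltjesFunction.measure_Ioc,
        StieltjesFunction.measure_Ioc, ENNReal.toReal_ofReal (sub_nonneg.2 (Fa.mono hx)),
        ENNReal.toReal_ofReal (sub_nonneg.2 (Fb.mono hx))]
    · rw [gMu, if_neg (not_le.2 hx), (hint μP inferInstance _ measurableSet_Ioc).2,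
        (hint μN inferInstance _ measurableSet_Ioc).2]
      have h1 : (μP (Ioc x 0)).toReal - (μN (Ioc x 0)).toReal
          = (ν1 (Ioc x 0)).toReal - (ν2 (Ioc x 0)).toReal := hs_apply _ measurableSet_Ioc
      have h2 : Ioc x (0:ℝ) ∩ Iic 0 = Ioc x 0 := by
        rw [inter_eq_left]; exact fun z hz => hz.2
      have h3 : Ioc x (0:ℝ) ∩ Ioi 0 = ∅ := by
        ext z; simp only [mem_inter_iff, mem_Ioc, mem_Ioi, mem_empty_iff_false, iff_false]
        rintro ⟨⟨-, h4⟩, h5⟩; exact absurd (h5.trans_le h4) (lt_irrefl 0)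
      have h4 : ν1 (Ioc x 0) = νb (Ioc x 0) := by
        rw [hν1_def, Measure.add_apply, Measure.restrict_apply measurableSet_Ioc,
          Measure.restrict_apply measurableSet_Ioc, h2, h3, measure_empty, zero_add]
      have h5 : ν2 (Ioc x 0) = νa (Ioc x 0) := by
        rw [hν2_def, Measure.add_apply, Measure.restrict_apply measurableSet_Ioc,
          Measure.restrict_apply measurableSet_Ioc, h2, h3, measure_empty, zero_add]
      rw [h1, h4, h5, hνa_def, hνb_def, StieltjesFunction.measure_Ioc,
        StieltjesFunction.measure_Ioc, ENNReal.toReal_ofReal (sub_nonneg.2 (Fb.mono hx.le)),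
        ENNReal.toReal_ofReal (sub_nonneg.2 (Fa.mono hx.le))]
      ring
  -- the jump part
  set Δ : ℝ → ℝ := fun x => (a x - Fa x) - (b x - Fb x) with hΔ_def
  have hjump_a : ∀ x, 0 ≤ Fa x - a x ∧ Fa x - a x ≤ (νa {x}).toReal :=
    fun x => ⟨sub_nonneg.2 (monotone_le_stieltjes hmono_a x), stieltjes_jump_le hmono_a x⟩
  have hjump_b : ∀ x, 0 ≤ Fb x - b x ∧ Fb x - b x ≤ (νb {x}).toReal :=
    fun x => ⟨sub_nonneg.2 (monotone_le_stieltjes hmono_b x), stieltjes_jump_le hmono_b x⟩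
  have habsΔ : ∀ x, |Δ x| ≤ (νa {x}).toReal + (νb {x}).toReal := by
    intro x
    refine (abs_sub (a x - Fa x) (b x - Fb x)).trans ?_
    have e1 : |a x - Fa x| = Fa x - a x := by
      rw [abs_sub_comm, abs_of_nonneg (hjump_a x).1]
    have e2 : |b x - Fb x| = Fb x - b x := by
      rw [abs_sub_comm, abs_of_nonneg (hjump_b x).1]
    rw [e1, e2]
    exact add_le_add (hjump_a x).2 (hjump_b x).2
  have hφp_le_one : ∀ x, φ x ^ (1 / p) ≤ 1 :=
    fun x => Real.rpow_le_one (hpos x).le (hle1 x) h1p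
  have hsa_ia : (νa univ).toReal = sa - ia := by
    rw [hνa_univ, ENNReal.toReal_ofReal (sub_nonneg.2 hia_sa)]
  have hsb_ib : (νb univ).toReal = sb - ib := by
    rw [hνb_univ, ENNReal.toReal_ofReal (sub_nonneg.2 hib_sb)]
  have hsum_bound : ∀ F : Finset ℝ,
      ∑ x ∈ F, |Δ x| * φ x ^ (1 / p) ≤ (sa - ia) + (sb - ib) := by
    intro F
    calc ∑ x ∈ F, |Δ x| * φ x ^ (1 / p) ≤ ∑ x ∈ F, |Δ x| :=
          Finset.sum_le_sum fun x _ => mul_le_of_le_one_right (abs_nonneg _) (hφp_le_one x)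
      _ ≤ ∑ x ∈ F, ((νa {x}).toReal + (νb {x}).toReal) :=
          Finset.sum_le_sum fun x _ => habsΔ x
      _ = (∑ x ∈ F, (νa {x}).toReal) + ∑ x ∈ F, (νb {x}).toReal := Finset.sum_add_distrib
      _ ≤ (νa univ).toReal + (νb univ).toReal :=
          add_le_add (finset_sum_singleton_le F) (finset_sum_singleton_le F)
      _ = (sa - ia) + (sb - ib) := by rw [hsa_ia, hsb_ib]
  have hsummable : Summable (fun x : ℝ => |Δ x| * φ x ^ (1 / p)) :=
    summable_of_sum_le (fun x => mul_nonneg (abs_nonneg _) (Real.rpow_nonneg (hpos x).le _))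
      hsum_bound
  have htsum : ∑' x : ℝ, |Δ x| * φ x ^ (1 / p) ≤ (sa - ia) + (sb - ib) :=
    Summable.tsum_le_of_sum_le hsummable hsum_bound
  -- countable support
  have hsupp : (Function.support Δ).Countable := by
    apply Set.Countable.mono ?_
      (hmono_a.countable_not_continuousAt.union hmono_b.countable_not_continuousAt)
    intro x hx
    by_contra hc
    simp only [mem_union, mem_setOf_eq, not_or, not_not] at hc
    apply hx
    show Δ x = 0
    rw [hΔ_def]
    simp only
    rw [hFa_def, hFb_def, stieltjes_eq_of_continuousAt hmono_a hc.1,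
      stieltjes_eq_of_continuousAt hmono_b hc.2]
    ring
  -- total mass bound
  obtain ⟨T, hTm, hT1, hT2⟩ := J.mutuallySingular
  have hμP_bound : (μP univ).toReal ≤ (ν1 univ).toReal := by
    have e1 : μP univ = μP Tᶜ := by
      rw [← measure_add_measure_compl hTm, hT1, zero_add]
    have e2 := hs_apply Tᶜ hTm.compl
    rw [hT2] at e2
    simp only [ENNReal.toReal_zero, sub_zero] at e2
    rw [e1, e2]
    have h3 : (ν1 Tᶜ).toReal ≤ (ν1 univ).toReal :=
      ENNReal.toReal_mono (measure_ne_top _ _) (measure_mono (subset_univ _))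
    have h4 : 0 ≤ (ν2 Tᶜ).toReal := ENNReal.toReal_nonneg
    linarith
  have hμN_bound : (μN univ).toReal ≤ (ν2 univ).toReal := by
    have e1 : μN univ = μN T := by
      rw [← measure_add_measure_compl hTm, hT2, add_zero]
    have e2 := hs_apply T hTm
    rw [hT1] at e2
    simp only [ENNReal.toReal_zero, zero_sub] at e2
    rw [e1]
    have e3 : (μN T).toReal = (ν2 T).toReal - (ν1 T).toReal := by linarith
    rw [e3]
    have h3 : (ν2 T).toReal ≤ (ν2 univ).toReal :=
      ENNReal.toReal_mono (measure_ne_top _ _) (measure_mono (subset_univ _))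
    have h4 : 0 ≤ (ν1 T).toReal := ENNReal.toReal_nonneg
    linarith
  have hν12 : (ν1 univ).toReal + (ν2 univ).toReal = (sa - ia) + (sb - ib) := by
    have ha' : νa (Ioi 0) + νa (Iic 0) = νa univ := by
      rw [show Iic (0:ℝ) = (Ioi 0)ᶜ from compl_Ioi.symm]
      exact measure_add_measure_compl measurableSet_Ioi
    have hb' : νb (Ioi 0) + νb (Iic 0) = νb univ := by
      rw [show Iic (0:ℝ) = (Ioi 0)ᶜ from compl_Ioi.symm]
      exact measure_add_measure_compl measurableSet_Ioi
    have key : ν1 univ + ν2 univ = νa univ + νb univ := by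
      rw [hν1_def, hν2_def]
      simp only [Measure.add_apply, Measure.restrict_apply_univ]
      rw [← ha', ← hb']
      ring
    have := congrArg ENNReal.toReal key
    rw [ENNReal.toReal_add (measure_ne_top _ _) (measure_ne_top _ _),
      ENNReal.toReal_add (measure_ne_top _ _) (measure_ne_top _ _), hsa_ia, hsb_ib] at this
    exact this
  -- `(sa - ia) + (sb - ib) ≤ V`
  have hAB : (sa - ia) + (sb - ib) ≤ V := by
    have hv_top : Tendsto (fun x => a x + b x) atTop (𝓝 (sa + sb)) := hta_top.add htb_top
    have hv_bot : Tendsto (fun x => a x + b x) atBot (𝓝 (ia + ib)) := hta_bot.add htb_bot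
    have key : Tendsto (fun t : ℝ => (a t + b t) - (a (-t) + b (-t))) atTop
        (𝓝 ((sa + sb) - (ia + ib))) :=
      hv_top.sub (hv_bot.comp tendsto_neg_atTop_atBot)
    have hle : ∀ᶠ t in (atTop : Filter ℝ), (a t + b t) - (a (-t) + b (-t)) ≤ V := by
      filter_upwards [eventually_ge_atTop (0:ℝ)] with t ht
      have h1 : -t ≤ t := by linarith
      have h2 := hvadd (-t) t
      have h3 := hvarV (-t) t h1
      simp only [ha_def, hb_def]
      linarith
    have := le_of_tendsto key hle
    linarith
  -- integrability of `φ ^ (1 + 1/p)`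
  have hexp : ∀ z, w z • φ z ^ (1 + 1 / p) = φ z ^ (1 / p) := by
    intro z
    rw [NNReal.smul_def, smul_eq_mul, hwcoe z, Real.rpow_add (hpos z), Real.rpow_one,
      ← mul_assoc, inv_mul_cancel₀ (hpos z).ne', one_mul]
  have hexp' : (fun z => w z • φ z ^ (1 + 1 / p)) = fun z => φ z ^ (1 / p) := funext hexp
  have hmeas_rpow : Measurable fun z => φ z ^ (1 / p) :=
    ((continuous_id.rpow_const fun _ => Or.inr h1p).measurable).comp hφm
  have hint_rpow : ∀ (ρ : Measure ℝ), IsFiniteMeasure ρ →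
      Integrable (fun z => φ z ^ (1 / p)) ρ := by
    intro ρ hρ
    haveI := hρ
    apply (integrable_const (1:ℝ)).mono' hmeas_rpow.aestronglyMeasurable
    filter_upwards with z
    rw [Real.norm_eq_abs, abs_of_nonneg (Real.rpow_nonneg (hpos z).le _)]
    exact hφp_le_one z
  have hint_pow : ∀ (ρ : Measure ℝ), IsFiniteMeasure ρ →
      Integrable (fun z => φ z ^ (1 + 1 / p)) (ρ.withDensity (fun z => ((w z : ℝ≥0) : ℝ≥0∞))) ∧
      ∫ z, φ z ^ (1 + 1 / p) ∂(ρ.withDensity (fun z => ((w z : ℝ≥0) : ℝ≥0∞)))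
        ≤ (ρ univ).toReal := by
    intro ρ hρ
    haveI := hρ
    constructor
    · rw [integrable_withDensity_iff_integrable_smul hw, hexp']
      exact hint_rpow ρ hρ
    · rw [integral_withDensity_eq_integral_smul hw, hexp']
      calc ∫ z, φ z ^ (1 / p) ∂ρ ≤ ∫ _, (1:ℝ) ∂ρ :=
            integral_mono (hint_rpow ρ hρ) (integrable_const 1) (hφp_le_one)
        _ = (ρ univ).toReal := by rw [integral_const, smul_eq_mul, mul_one, measureReal_def]
  -- assemble everything
  refine ⟨g 0 + Fa 0 - Fb 0, μp, μn, Δ, ⟨?_, ?_, ?_, ?_, ?_, hsupp, hsummable, ?_⟩, ?_⟩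
  · rw [hμp_def]; infer_instance
  · rw [hμn_def]; infer_instance
  · exact J.mutuallySingular.mono_ac (withDensity_absolutelyContinuous _ _)
      (withDensity_absolutelyContinuous _ _)
  · intro x
    exact ⟨(hint μP inferInstance _ measurableSet_Ioc).1,
      (hint μP inferInstance _ measurableSet_Ioc).1,
      (hint μN inferInstance _ measurableSet_Ioc).1,
      (hint μN inferInstance _ measurableSet_Ioc).1⟩
  · exact ((hint_pow μP inferInstance).1).add_measure ((hint_pow μN inferInstance).1)
  · intro x
    rw [hgMu x]
    have h1 := hab x
    simp only [hΔ_def]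
    linarith
  · rw [Vpphi, integral_add_measure (hint_pow μP inferInstance).1 (hint_pow μN inferInstance).1]
    have h1 := (hint_pow μP inferInstance).2
    have h2 := (hint_pow μN inferInstance).2
    linarith [hμP_bound, hμN_bound, hν12, hAB, htsum]
end

section
/- Fix p ∈ [1,∞) and a bump function φ that decays faster than any polynomial, i.e., for every m > 0 there is C_m with φ(x) ≤ C_m |x|^{−m} for |x| ≥ 1. Then every polynomial g : ℝ → ℝ belongs to G_{p,φ}; concretely, g = g(0) + g^μ for the signed measure dμ(z) = sgn(z) g'(z)/φ(z) dz, and V_{p,φ}(g) = ∫_ℝ φ(z)^{1/p} |g'(z)| dz < ∞. -/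
open MeasureTheory Filter Set
open scoped NNReal ENNReal

lemma measurable_realSign : Measurable Real.sign := by
  have h : Real.sign = fun r : ℝ => if r < 0 then (-1 : ℝ) else if 0 < r then 1 else 0 := rfl
  rw [h]
  exact Measurable.ite measurableSet_Iio measurable_const
    (Measurable.ite measurableSet_Ioi measurable_const measurable_const)

lemma IsBump.aemeasurable {φ : ℝ → ℝ} (hφ : IsBump φ) :
    AEMeasurable φ (volume : Measure ℝ) := by
  obtain ⟨-, -, hm, ha, -, -⟩ := hφ
  have h1 : AEMeasurable φ ((volume : Measure ℝ).restrict (Iic 0)) :=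
    aemeasurable_restrict_of_monotoneOn measurableSet_Iic hm
  have h2 : AEMeasurable φ ((volume : Measure ℝ).restrict (Ioi 0)) :=
    aemeasurable_restrict_of_antitoneOn measurableSet_Ioi ha
  have h3 := Measure.restrict_add_restrict_compl (μ := (volume : Measure ℝ)) (s := Iic 0)
    measurableSet_Iic
  rw [compl_Iic] at h3
  rw [← h3]
  exact aemeasurable_add_measure_iff.2 ⟨h1, h2⟩

lemma aemeas_rpow {φ : ℝ → ℝ} (hpos : ∀ z, 0 < φ z)
    (hφae : AEMeasurable φ (volume : Measure ℝ)) (c : ℝ) :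
    AEMeasurable (fun z => φ z ^ c) (volume : Measure ℝ) := by
  have h : (fun z => φ z ^ c) = fun z => Real.exp (Real.log (φ z) * c) :=
    funext fun z => Real.rpow_def_of_pos (hpos z) c
  rw [h]
  exact Real.measurable_exp.comp_aemeasurable
    ((Real.measurable_log.comp_aemeasurable hφae).mul aemeasurable_const)

lemma poly_abs_le (Q : Polynomial ℝ) :
    ∃ D : ℝ, 0 ≤ D ∧ ∀ x : ℝ, 1 ≤ |x| → |Q.eval x| ≤ D * |x| ^ Q.natDegree := by
  refine ⟨∑ i ∈ Finset.range (Q.natDegree + 1), |Q.coeff i|,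
    Finset.sum_nonneg fun i _ => abs_nonneg _, fun x hx => ?_⟩
  rw [Polynomial.eval_eq_sum_range]
  calc |∑ i ∈ Finset.range (Q.natDegree + 1), Q.coeff i * x ^ i|
      ≤ ∑ i ∈ Finset.range (Q.natDegree + 1), |Q.coeff i * x ^ i| :=
        Finset.abs_sum_le_sum_abs _ _
    _ ≤ ∑ i ∈ Finset.range (Q.natDegree + 1), |Q.coeff i| * |x| ^ Q.natDegree := by
        refine Finset.sum_le_sum fun i hi => ?_
        rw [abs_mul, abs_pow]
        exact mul_le_mul_of_nonneg_left
          (pow_le_pow_right₀ hx (Nat.lt_succ_iff.mp (Finset.mem_range.mp hi))) (abs_nonneg _)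
    _ = _ := by rw [← Finset.sum_mul]

lemma F_integrable {p : ℝ} (hp : 1 ≤ p) {φ : ℝ → ℝ} (hφ : IsBump φ)
    (hdecay : ∀ m : ℝ, 0 < m → ∃ Cm : ℝ, ∀ x : ℝ, 1 ≤ |x| → φ x ≤ Cm * |x| ^ (-m))
    (Q : Polynomial ℝ) :
    Integrable (fun z : ℝ => φ z ^ (1 / p) * |Q.eval z|) := by
  have hpos := hφ.1
  have hle1 := hφ.2.1
  have hp0 : (0:ℝ) < p := lt_of_lt_of_le one_pos hp
  have hφae := hφ.aemeasurable
  have hQc : Continuous fun z : ℝ => |Q.eval z| := (Q.continuous).abs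
  have hFm : AEStronglyMeasurable (fun z : ℝ => φ z ^ (1 / p) * |Q.eval z|) volume :=
    ((aemeas_rpow hpos hφae (1/p)).mul hQc.measurable.aemeasurable).aestronglyMeasurable
  have hFnn : ∀ z : ℝ, 0 ≤ φ z ^ (1 / p) * |Q.eval z| := fun z =>
    mul_nonneg (Real.rpow_nonneg (hpos z).le _) (abs_nonneg _)
  set n := Q.natDegree with hn
  obtain ⟨Cm, hCm⟩ := hdecay (p * (n + 2)) (by positivity)
  have hCm0 : 0 < Cm := by
    have h1 := hCm 1 (by norm_num)
    simp only [abs_one, Real.one_rpow, mul_one] at h1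
    exact lt_of_lt_of_le (hpos 1) h1
  obtain ⟨D, hD0, hD⟩ := poly_abs_le Q
  set E := Cm ^ (1/p) * D with hE
  -- key bound for |x| ≥ 1
  have hFb : ∀ x : ℝ, 1 ≤ |x| → φ x ^ (1 / p) * |Q.eval x| ≤ E * |x| ^ (-2 : ℝ) := by
    intro x hx
    have hx0 : (0:ℝ) < |x| := lt_of_lt_of_le one_pos hx
    have h1 : φ x ^ (1/p) ≤ (Cm * |x| ^ (-(p * (n+2)))) ^ (1/p) :=
      Real.rpow_le_rpow (hpos x).le (hCm x hx) (by positivity)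
    have h2 : (Cm * |x| ^ (-(p * (n+2)))) ^ (1/p) = Cm ^ (1/p) * |x| ^ (-(n+2:ℝ)) := by
      rw [Real.mul_rpow hCm0.le (Real.rpow_nonneg hx0.le _), ← Real.rpow_mul hx0.le]
      have hexp : -(p * ((n:ℝ) + 2)) * (1/p) = -((n:ℝ)+2) := by field_simp
      rw [hexp]
    calc φ x ^ (1/p) * |Q.eval x|
        ≤ (Cm ^ (1/p) * |x| ^ (-(n+2:ℝ))) * (D * |x| ^ n) := by
          refine mul_le_mul (h2 ▸ h1) (hD x hx) (abs_nonneg _) ?_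
          positivity
      _ = E * (|x| ^ (-(n+2:ℝ)) * |x| ^ (n:ℝ)) := by
          rw [Real.rpow_natCast]; ring
      _ = E * |x| ^ (-2:ℝ) := by
          rw [← Real.rpow_add hx0]
          congr 1
          ring
  -- integrability of the comparison function on the two tails
  have hIoi : IntegrableOn (fun x : ℝ => |x| ^ (-2:ℝ)) (Ioi (1:ℝ)) volume := by
    refine (integrableOn_Ioi_rpow_of_lt (show (-2:ℝ) < -1 by norm_num) one_pos).congr_fun
      (fun x hx => ?_) measurableSet_Ioi
    rw [abs_of_pos (lt_trans one_pos hx)]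
  have hIio : IntegrableOn (fun x : ℝ => |x| ^ (-2:ℝ)) (Iio (-1:ℝ)) volume := by
    rw [← (Measure.measurePreserving_neg (volume : Measure ℝ)).integrableOn_comp_preimage
        (Homeomorph.neg ℝ).measurableEmbedding]
    simp only [Function.comp_def, abs_neg, neg_preimage, neg_Iio, neg_neg]
    exact hIoi
  have huniv : (univ : Set ℝ) = Iio (-1) ∪ (Icc (-1) 1 ∪ Ioi 1) := by
    rw [Icc_union_Ioi_eq_Ici (by norm_num : (-1:ℝ) ≤ 1), Iio_union_Ici]
  rw [← integrableOn_univ, huniv]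
  have htail : ∀ s : Set ℝ, MeasurableSet s → (∀ x ∈ s, 1 ≤ |x|) →
      IntegrableOn (fun x : ℝ => |x| ^ (-2:ℝ)) s volume →
      IntegrableOn (fun z : ℝ => φ z ^ (1 / p) * |Q.eval z|) s volume := by
    intro s hs hs1 hint
    refine Integrable.mono' (hint.const_mul E) hFm.restrict ?_
    filter_upwards [ae_restrict_mem hs] with x hx
    rw [Real.norm_eq_abs, abs_of_nonneg (hFnn x)]
    exact hFb x (hs1 x hx)
  refine IntegrableOn.union ?_ (IntegrableOn.union ?_ ?_)
  · exact htail _ measurableSet_Iio (fun x hx => le_abs.2 (Or.inr (by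
      simp only [mem_Iio] at hx; linarith))) hIio
  · refine Integrable.mono' (hQc.integrableOn_Icc) hFm.restrict ?_
    filter_upwards with x
    rw [Real.norm_eq_abs, abs_of_nonneg (hFnn x)]
    exact mul_le_of_le_one_left (abs_nonneg _)
      (Real.rpow_le_one (hpos x).le (hle1 x) (by positivity))
  · exact htail _ measurableSet_Ioi (fun x hx => le_abs.2 (Or.inl (by
      simp only [mem_Ioi] at hx; linarith))) hIoi

/-- If the bump function `φ` decays faster than any polynomial, then every polynomial `g`
belongs to `G_{p,φ}`: concretely `g = g(0) + g^μ` with `dμ(z) = sgn(z) g'(z)/φ(z) dz` and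
`V_{p,φ}(g) = ∫ φ^{1/p} |g'| dz < ∞`. -/
theorem polynomials_mem_G (p : ℝ) (hp : 1 ≤ p) (φ : ℝ → ℝ) (hφ : IsBump φ)
    (hdecay : ∀ m : ℝ, 0 < m → ∃ Cm : ℝ, ∀ x : ℝ, 1 ≤ |x| → φ x ≤ Cm * |x| ^ (-m))
    (P : Polynomial ℝ) :
    ∃ μp μn : Measure ℝ,
      μp = volume.withDensity (fun z => ENNReal.ofReal
        (Real.sign z * Polynomial.eval z (Polynomial.derivative P) / φ z)) ∧
      μn = volume.withDensity (fun z => ENNReal.ofReal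
        (-(Real.sign z * Polynomial.eval z (Polynomial.derivative P) / φ z))) ∧
      IsGRep p φ (fun x => Polynomial.eval x P) (Polynomial.eval 0 P) μp μn 0 ∧
      Vpphi p φ μp μn 0 =
        ∫ z : ℝ, φ z ^ (1 / p) * |Polynomial.eval z (Polynomial.derivative P)| ∧
      Integrable (fun z : ℝ =>
        φ z ^ (1 / p) * |Polynomial.eval z (Polynomial.derivative P)|) := by
  obtain ⟨hpos, hle1, -, -, -, -⟩ := id hφ
  have hφae := hφ.aemeasurable
  have hp0 : (0:ℝ) < p := lt_of_lt_of_le one_pos hp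
  set e : ℝ → ℝ := fun z => Polynomial.eval z (Polynomial.derivative P) with he
  set h : ℝ → ℝ := fun z => Real.sign z * e z / φ z with hh
  have hec : Continuous e := Polynomial.continuous _
  have hhae : AEMeasurable h (volume : Measure ℝ) :=
    ((measurable_realSign.mul hec.measurable).aemeasurable).div hφae
  set h' : ℝ → ℝ := hhae.mk h with hh'
  have hh'm : Measurable h' := hhae.measurable_mk
  have hhh' : h =ᵐ[volume] h' := hhae.ae_eq_mk
  set μp : Measure ℝ := volume.withDensity (fun z => ENNReal.ofReal (h z)) with hμp
  set μn : Measure ℝ := volume.withDensity (fun z => ENNReal.ofReal (-h z)) with hμn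
  have hμp' : μp = volume.withDensity (fun z => ENNReal.ofReal (h' z)) := by
    rw [hμp]; exact withDensity_congr_ae (hhh'.mono fun z hz => by dsimp only; rw [hz])
  have hμn' : μn = volume.withDensity (fun z => ENNReal.ofReal (-h' z)) := by
    rw [hμn]; exact withDensity_congr_ae (hhh'.mono fun z hz => by dsimp only; rw [hz])
  have hmeas_p : Measurable fun z => ENNReal.ofReal (h' z) :=
    ENNReal.measurable_ofReal.comp hh'm
  have hmeas_n : Measurable fun z => ENNReal.ofReal (-h' z) :=
    ENNReal.measurable_ofReal.comp hh'm.neg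
  have hfin : ∀ᵐ z : ℝ ∂(volume : Measure ℝ), ENNReal.ofReal (h' z) < ⊤ :=
    ae_of_all _ fun z => ENNReal.ofReal_lt_top
  have hfin' : ∀ᵐ z : ℝ ∂(volume : Measure ℝ), ENNReal.ofReal (-h' z) < ⊤ :=
    ae_of_all _ fun z => ENNReal.ofReal_lt_top
  have hne0 : ∀ᵐ z : ℝ ∂(volume : Measure ℝ), z ≠ 0 := by
    rw [ae_iff]
    simp only [ne_eq, not_not, setOf_eq_eq_singleton]
    exact measure_singleton 0
  have habs : ∀ z : ℝ, |Real.sign z| ≤ 1 := fun z => by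
    rcases Real.sign_apply_eq z with hs | hs | hs <;> rw [hs] <;> norm_num
  -- pointwise bounds
  have hφh : ∀ z : ℝ, φ z * h z = Real.sign z * e z := fun z => by
    rw [hh]; dsimp only; rw [mul_comm, div_mul_cancel₀ _ (hpos z).ne']
  have hb1 : ∀ z : ℝ, φ z * max (h z) 0 ≤ |e z| := by
    intro z
    rw [mul_max_of_nonneg _ _ (hpos z).le, mul_zero, hφh z]
    refine max_le (le_trans (le_abs_self _) ?_) (abs_nonneg _)
    rw [abs_mul]
    exact mul_le_of_le_one_left (abs_nonneg _) (habs z)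
  have hb2 : ∀ z : ℝ, φ z * max (-h z) 0 ≤ |e z| := by
    intro z
    rw [mul_max_of_nonneg _ _ (hpos z).le, mul_zero, mul_neg, hφh z]
    refine max_le (le_trans (le_abs_self _) ?_) (abs_nonneg _)
    rw [abs_neg, abs_mul]
    exact mul_le_of_le_one_left (abs_nonneg _) (habs z)
  have hmax : ∀ a : ℝ, max a 0 - max (-a) 0 = a := by
    intro a
    rcases le_total a 0 with ha | ha
    · rw [max_eq_right ha, max_eq_left (neg_nonneg.2 ha)]; ring
    · rw [max_eq_left ha, max_eq_right (neg_nonpos.2 ha)]; ring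
  -- integrability of restricted integrands
  have hresP : ∀ a b : ℝ, Integrable (fun z => φ z * max (h' z) 0)
      ((volume : Measure ℝ).restrict (Ioc a b)) := by
    intro a b
    refine Integrable.mono' ((hec.abs).integrableOn_Ioc)
      ((hφae.mul ((hh'm.max measurable_const).aemeasurable)).restrict.aestronglyMeasurable) ?_
    filter_upwards [ae_restrict_of_ae hhh'] with z hz
    rw [Real.norm_eq_abs, abs_of_nonneg (mul_nonneg (hpos z).le (le_max_right _ _)), ← hz]
    exact hb1 z
  have hresN : ∀ a b : ℝ, Integrable (fun z => φ z * max (-h' z) 0)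
      ((volume : Measure ℝ).restrict (Ioc a b)) := by
    intro a b
    refine Integrable.mono' ((hec.abs).integrableOn_Ioc)
      ((hφae.mul ((hh'm.neg.max measurable_const).aemeasurable)).restrict.aestronglyMeasurable) ?_
    filter_upwards [ae_restrict_of_ae hhh'] with z hz
    rw [Real.norm_eq_abs, abs_of_nonneg (mul_nonneg (hpos z).le (le_max_right _ _)), ← hz]
    exact hb2 z
  -- local integrability clause
  have hIocP : ∀ a b : ℝ, IntegrableOn φ (Ioc a b) μp := by
    intro a b
    rw [hμp', IntegrableOn, restrict_withDensity measurableSet_Ioc,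
      integrable_withDensity_iff hmeas_p (ae_of_all _ fun z => ENNReal.ofReal_lt_top)]
    simpa only [ENNReal.toReal_ofReal'] using hresP a b
  have hIocN : ∀ a b : ℝ, IntegrableOn φ (Ioc a b) μn := by
    intro a b
    rw [hμn', IntegrableOn, restrict_withDensity measurableSet_Ioc,
      integrable_withDensity_iff hmeas_n (ae_of_all _ fun z => ENNReal.ofReal_lt_top)]
    simpa only [ENNReal.toReal_ofReal'] using hresN a b
  -- global integrability of φ^(1+1/p)
  have hF : Integrable (fun z : ℝ => φ z ^ (1 / p) * |e z|) := F_integrable hp hφ hdecay _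
  have hrpm : AEMeasurable (fun z : ℝ => φ z ^ (1 + 1/p)) (volume : Measure ℝ) :=
    aemeas_rpow hpos hφae _
  have hsplit : ∀ z : ℝ, φ z ^ (1 + 1/p) = φ z ^ (1/p) * φ z := fun z => by
    rw [Real.rpow_add (hpos z), Real.rpow_one, mul_comm]
  have hgint_p : Integrable (fun z => φ z ^ (1 + 1/p) * max (h' z) 0) (volume : Measure ℝ) := by
    refine Integrable.mono' hF
      ((hrpm.mul ((hh'm.max measurable_const).aemeasurable)).aestronglyMeasurable) ?_
    filter_upwards [hhh'] with z hz
    rw [Real.norm_eq_abs,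
      abs_of_nonneg (mul_nonneg (Real.rpow_nonneg (hpos z).le _) (le_max_right _ _)),
      hsplit z, mul_assoc, ← hz]
    exact mul_le_mul_of_nonneg_left (hb1 z) (Real.rpow_nonneg (hpos z).le _)
  have hgint_n : Integrable (fun z => φ z ^ (1 + 1/p) * max (-h' z) 0) (volume : Measure ℝ) := by
    refine Integrable.mono' hF
      ((hrpm.mul ((hh'm.neg.max measurable_const).aemeasurable)).aestronglyMeasurable) ?_
    filter_upwards [hhh'] with z hz
    rw [Real.norm_eq_abs,
      abs_of_nonneg (mul_nonneg (Real.rpow_nonneg (hpos z).le _) (le_max_right _ _)),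
      hsplit z, mul_assoc, ← hz]
    exact mul_le_mul_of_nonneg_left (hb2 z) (Real.rpow_nonneg (hpos z).le _)
  have hIp : Integrable (fun z => φ z ^ (1 + 1/p)) μp := by
    rw [hμp', integrable_withDensity_iff hmeas_p hfin]
    simpa only [ENNReal.toReal_ofReal'] using hgint_p
  have hIn : Integrable (fun z => φ z ^ (1 + 1/p)) μn := by
    rw [hμn', integrable_withDensity_iff hmeas_n hfin']
    simpa only [ENNReal.toReal_ofReal'] using hgint_n
  -- the integral computation
  have hofReal_p : (fun z => ENNReal.ofReal (h' z))
      = (fun z => ((Real.toNNReal (h' z)) : ENNReal)) := rfl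
  have hofReal_n : (fun z => ENNReal.ofReal (-h' z))
      = (fun z => ((Real.toNNReal (-h' z)) : ENNReal)) := rfl
  have hint_eq : (∫ z, φ z ^ (1 + 1/p) ∂μp) + (∫ z, φ z ^ (1 + 1/p) ∂μn)
      = ∫ z : ℝ, φ z ^ (1 / p) * |e z| := by
    rw [hμp', hμn', hofReal_p, hofReal_n,
      integral_withDensity_eq_integral_smul hh'm.real_toNNReal,
      integral_withDensity_eq_integral_smul (f := fun z => (-h' z).toNNReal) hh'm.neg.real_toNNReal]
    have e1 : ∀ z : ℝ, (Real.toNNReal (h' z)) • (φ z ^ (1 + 1/p))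
        = φ z ^ (1 + 1/p) * max (h' z) 0 := fun z => by
      rw [NNReal.smul_def, smul_eq_mul, Real.coe_toNNReal', mul_comm]
    have e2 : ∀ z : ℝ, (Real.toNNReal (-h' z)) • (φ z ^ (1 + 1/p))
        = φ z ^ (1 + 1/p) * max (-h' z) 0 := fun z => by
      rw [NNReal.smul_def, smul_eq_mul, Real.coe_toNNReal', mul_comm]
    simp_rw [e1, e2]
    rw [← integral_add hgint_p hgint_n]
    refine integral_congr_ae ?_
    filter_upwards [hhh', hne0] with z hz hz0
    rw [← mul_add, max_zero_add_max_neg_zero_eq_abs_self, ← hz, hsplit z]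
    have hsgn : |Real.sign z| = 1 := by
      rcases Real.sign_apply_eq_of_ne_zero z hz0 with hs | hs <;> rw [hs] <;> norm_num
    rw [hh]
    simp only [abs_div, abs_mul, hsgn, one_mul, abs_of_pos (hpos z)]
    have hre : φ z ^ (1/p) * φ z * (|e z| / φ z)
        = φ z ^ (1/p) * (|e z| / φ z * φ z) := by ring
    rw [hre, div_mul_cancel₀ _ (hpos z).ne']
  -- gMu computation
  have hIocInt : ∀ a b : ℝ, (∫ z in Ioc a b, φ z ∂μp) - (∫ z in Ioc a b, φ z ∂μn)
      = ∫ z in Ioc a b, Real.sign z * e z := by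
    intro a b
    rw [hμp', hμn', restrict_withDensity measurableSet_Ioc,
      restrict_withDensity measurableSet_Ioc, hofReal_p, hofReal_n,
      integral_withDensity_eq_integral_smul hh'm.real_toNNReal,
      integral_withDensity_eq_integral_smul (f := fun z => (-h' z).toNNReal) hh'm.neg.real_toNNReal]
    have e1 : ∀ z : ℝ, (Real.toNNReal (h' z)) • (φ z) = φ z * max (h' z) 0 := fun z => by
      rw [NNReal.smul_def, smul_eq_mul, Real.coe_toNNReal', mul_comm]
    have e2 : ∀ z : ℝ, (Real.toNNReal (-h' z)) • (φ z) = φ z * max (-h' z) 0 := fun z => by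
      rw [NNReal.smul_def, smul_eq_mul, Real.coe_toNNReal', mul_comm]
    simp_rw [e1, e2]
    rw [← integral_sub (hresP a b) (hresN a b)]
    refine integral_congr_ae ?_
    filter_upwards [ae_restrict_of_ae hhh'] with z hz
    rw [← hz, ← mul_sub, hmax, hφh z]
  have hFTC : ∀ a b : ℝ, (∫ z in a..b, e z) = Polynomial.eval b P - Polynomial.eval a P := by
    intro a b
    exact intervalIntegral.integral_eq_sub_of_hasDerivAt
      (fun t _ => Polynomial.hasDerivAt P t) (hec.intervalIntegrable a b)
  have hgMu : ∀ x : ℝ, gMu φ μp μn x = Polynomial.eval x P - Polynomial.eval 0 P := by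
    intro x
    rw [gMu]
    split_ifs with hx
    · rw [hIocInt 0 x]
      have : (∫ z in Ioc 0 x, Real.sign z * e z) = ∫ z in Ioc 0 x, e z := by
        refine setIntegral_congr_ae measurableSet_Ioc (ae_of_all _ fun z hz => ?_)
        rw [Real.sign_of_pos hz.1, one_mul]
      rw [this, ← intervalIntegral.integral_of_le hx, hFTC]
    · push_neg at hx
      rw [hIocInt x 0]
      have : (∫ z in Ioc x 0, Real.sign z * e z) = ∫ z in Ioc x 0, -e z := by
        refine setIntegral_congr_ae measurableSet_Ioc ?_
        filter_upwards [hne0] with z hz0 hz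
        have hzneg : z < 0 := lt_of_le_of_ne hz.2 hz0
        rw [Real.sign_of_neg hzneg, neg_one_mul]
      rw [this, integral_neg, ← intervalIntegral.integral_of_le hx.le, hFTC]
      ring
  refine ⟨μp, μn, rfl, rfl, ?_, ?_, ?_⟩
  · refine ⟨?_, ?_, ?_, ?_, ?_, ?_, ?_, ?_⟩
    · rw [hμp]; infer_instance
    · rw [hμn]; infer_instance
    · have hs : MeasurableSet {z : ℝ | h' z ≤ 0} := measurableSet_le hh'm measurable_const
      refine ⟨{z | h' z ≤ 0}, hs, ?_, ?_⟩
      · rw [hμp', withDensity_apply _ hs]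
        rw [setLIntegral_congr_fun hs
          (fun z hz => ENNReal.ofReal_eq_zero.2 hz)]
        simp
      · rw [hμn', withDensity_apply _ hs.compl]
        rw [setLIntegral_congr_fun hs.compl
          (fun z hz => ENNReal.ofReal_eq_zero.2 (by
            simp only [mem_compl_iff, mem_setOf_eq, not_le] at hz; linarith))]
        simp
    · exact fun x => ⟨hIocP 0 x, hIocP x 0, hIocN 0 x, hIocN x 0⟩
    · exact hIp.add_measure hIn
    · simp
    · simp only [Pi.zero_apply, abs_zero, zero_mul]
      exact summable_zero
    · intro x
      simp only [Pi.zero_apply, add_zero]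
      rw [hgMu x]
      ring
  · rw [Vpphi]
    simp only [Pi.zero_apply, abs_zero, zero_mul, tsum_zero, add_zero]
    rw [integral_add_measure hIp hIn, hint_eq]
  · exact hF
end
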